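/- arXiv:1312.4043 — 4 statements merged into one kernel-verified Lean document; each statement's English description precedes it below -/
import Mathlib

section
/- Mutual exclusion for the integer ticket protocol: in any reachable global state of the system where each thread t has a program counter pc(t) ∈ {1,…,7} and a ticket ticket(t) ∈ ℤ, with globals avail (next ticket) and min (minimum outstanding ticket), the following three properties are simultaneously inductive invariants: (activelow) pc(t) ∈ {4,5,6} → ticket(t) < avail; (notsame) t ≠ t' ∧ pc(t) ∈ {4,5,6} ∧ pc(t') ∈ {4,5,6} → ticket(t) ≠ ticket(t'); (minticket) pc(t) ∈ {5,6} → min = ticket(t). In particular, mutual exclusion holds: no two distinct threads have pc in {5,6} simultaneously. -/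
/-- Global state of the integer ticket protocol. -/
structure IState (T : Type*) where
  avail : ℤ
  tmin : ℤ
  pc : T → Fin 8
  ticket : T → ℤ

/-- Initial condition: counters at 0, every thread at location 1 with ticket 0. -/
def IInit {T : Type*} (s : IState T) : Prop :=
  s.avail = 0 ∧ s.tmin = 0 ∧ (∀ t, s.pc t = 1) ∧ (∀ t, s.ticket t = 0)

/-- The transitions of thread `a` in the integer ticket protocol. -/
def IStep {T : Type*} [DecidableEq T] (a : T) (s s' : IState T) : Prop :=
  -- τ₁ : 1 → 2
  (s.pc a = 1 ∧ s'.pc = Function.update s.pc a 2 ∧ s'.ticket = s.ticket ∧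
    s'.avail = s.avail ∧ s'.tmin = s.tmin) ∨
  -- τ₂ : 2 → 3
  (s.pc a = 2 ∧ s'.pc = Function.update s.pc a 3 ∧ s'.ticket = s.ticket ∧
    s'.avail = s.avail ∧ s'.tmin = s.tmin) ∨
  -- τ₃ : 3 → 4, takes a fresh ticket
  (s.pc a = 3 ∧ s'.pc = Function.update s.pc a 4 ∧
    s'.ticket = Function.update s.ticket a s.avail ∧
    s'.avail = s.avail + 1 ∧ s'.tmin = s.tmin) ∨
  -- τ₄ : 4 → 5, guarded by min = ticket(a)
  (s.pc a = 4 ∧ s.tmin = s.ticket a ∧ s'.pc = Function.update s.pc a 5 ∧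
    s'.ticket = s.ticket ∧ s'.avail = s.avail ∧ s'.tmin = s.tmin) ∨
  -- τ₅ : 5 → 6
  (s.pc a = 5 ∧ s'.pc = Function.update s.pc a 6 ∧ s'.ticket = s.ticket ∧
    s'.avail = s.avail ∧ s'.tmin = s.tmin) ∨
  -- τ₆ : 6 → 7, updates min to the minimum of the remaining active tickets
  (s.pc a = 6 ∧ s'.pc = Function.update s.pc a 7 ∧ s'.ticket = s.ticket ∧
    s'.avail = s.avail ∧
    ((Set.Nonempty {z : ℤ | ∃ t', t' ≠ a ∧ (s.pc t' = 4 ∨ s.pc t' = 5) ∧ s.ticket t' = z} →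
        IsLeast {z : ℤ | ∃ t', t' ≠ a ∧ (s.pc t' = 4 ∨ s.pc t' = 5) ∧ s.ticket t' = z} s'.tmin) ∧
     (¬ Set.Nonempty {z : ℤ | ∃ t', t' ≠ a ∧ (s.pc t' = 4 ∨ s.pc t' = 5) ∧ s.ticket t' = z} →
        s'.tmin = s.avail))) ∨
  -- τ₇ : 7 → 1
  (s.pc a = 7 ∧ s'.pc = Function.update s.pc a 1 ∧ s'.ticket = s.ticket ∧
    s'.avail = s.avail ∧ s'.tmin = s.tmin)

/-- A state is reachable if obtained from an initial state by finitely many transitions. -/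
def IReachable {T : Type*} [DecidableEq T] (s : IState T) : Prop :=
  ∃ s₀, IInit s₀ ∧ Relation.ReflTransGen (fun u v => ∃ a, IStep a u v) s₀ s

section Aux
variable {T : Type*} [DecidableEq T]

/-- The inductive invariant. -/
def IInv (s : IState T) : Prop :=
  (∀ t, (s.pc t = 4 ∨ s.pc t = 5 ∨ s.pc t = 6) → s.ticket t < s.avail) ∧
  (∀ t t', t ≠ t' → (s.pc t = 4 ∨ s.pc t = 5 ∨ s.pc t = 6) →
      (s.pc t' = 4 ∨ s.pc t' = 5 ∨ s.pc t' = 6) → s.ticket t ≠ s.ticket t') ∧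
  (∀ t, (s.pc t = 5 ∨ s.pc t = 6) → s.tmin = s.ticket t)

lemma IInv_init {s : IState T} (h : IInit s) : IInv s := by
  obtain ⟨-, -, hp, -⟩ := h
  refine ⟨?_, ?_, ?_⟩
  · intro t ht; rw [hp t] at ht; simp at ht
  · intro t t' _ ht; rw [hp t] at ht; simp at ht
  · intro t ht; rw [hp t] at ht; simp at ht

lemma IInv_move {a : T} {s s' : IState T} (h : IInv s) (v : Fin 8)
    (hv4 : v ≠ 4) (hv5 : v ≠ 5) (hv6 : v ≠ 6)
    (hp' : s'.pc = Function.update s.pc a v) (htk : s'.ticket = s.ticket)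
    (hav : s'.avail = s.avail) (hmin : s'.tmin = s.tmin) : IInv s' := by
  obtain ⟨h1, h2, h3⟩ := h
  refine ⟨?_, ?_, ?_⟩
  · intro t ht
    rw [htk, hav]
    by_cases hta : t = a
    · subst hta; rw [hp', Function.update_self] at ht; tauto
    · rw [hp', Function.update_of_ne hta] at ht
      exact h1 t ht
  · intro t t' htt ht ht'
    rw [htk]
    by_cases hta : t = a
    · subst hta; rw [hp', Function.update_self] at ht; tauto
    · by_cases ht'a : t' = a
      · subst ht'a; rw [hp', Function.update_self] at ht'; tauto
      · rw [hp', Function.update_of_ne hta] at ht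
        rw [hp', Function.update_of_ne ht'a] at ht'
        exact h2 t t' htt ht ht'
  · intro t ht
    rw [hmin, htk]
    by_cases hta : t = a
    · subst hta; rw [hp', Function.update_self] at ht; tauto
    · rw [hp', Function.update_of_ne hta] at ht
      exact h3 t ht

lemma IInv_step {a : T} {s s' : IState T} (h : IInv s) (hs : IStep a s s') : IInv s' := by
  obtain ⟨h1, h2, h3⟩ := h
  rcases hs with ⟨hpc, hp', htk, hav, hmin⟩ | ⟨hpc, hp', htk, hav, hmin⟩ |
    ⟨hpc, hp', htk, hav, hmin⟩ | ⟨hpc, hg, hp', htk, hav, hmin⟩ |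
    ⟨hpc, hp', htk, hav, hmin⟩ | ⟨hpc, hp', htk, hav, hne, hemp⟩ |
    ⟨hpc, hp', htk, hav, hmin⟩
  · exact IInv_move ⟨h1, h2, h3⟩ 2 (by decide) (by decide) (by decide) hp' htk hav hmin
  case inr.inr.inr.inr.inr.inr =>
    exact IInv_move ⟨h1, h2, h3⟩ 1 (by decide) (by decide) (by decide) hp' htk hav hmin
  · exact IInv_move ⟨h1, h2, h3⟩ 3 (by decide) (by decide) (by decide) hp' htk hav hmin
  -- τ₃ : takes a fresh ticket
  · refine ⟨?_, ?_, ?_⟩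
    · intro t ht
      rw [htk, hav]
      by_cases hta : t = a
      · subst hta; simp
      · rw [Function.update_of_ne hta]
        rw [hp', Function.update_of_ne hta] at ht
        have := h1 t ht; omega
    · intro t t' htt ht ht'
      rw [htk]
      by_cases hta : t = a
      · have ht'a : t' ≠ a := fun hh => htt (hta.trans hh.symm)
        subst hta
        rw [hp', Function.update_of_ne ht'a] at ht'
        have := h1 t' ht'
        simp [Function.update_of_ne ht'a]
        omega
      · by_cases ht'a : t' = a
        · subst ht'a
          rw [hp', Function.update_of_ne hta] at ht
          have := h1 t ht
          simp [Function.update_of_ne hta]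
          omega
        · rw [hp', Function.update_of_ne hta] at ht
          rw [hp', Function.update_of_ne ht'a] at ht'
          rw [Function.update_of_ne hta, Function.update_of_ne ht'a]
          exact h2 t t' htt ht ht'
    · intro t ht
      rw [hmin, htk]
      by_cases hta : t = a
      · subst hta; rw [hp'] at ht; simp at ht
      · rw [hp', Function.update_of_ne hta] at ht
        rw [Function.update_of_ne hta]
        exact h3 t ht
  -- τ₄ : 4 → 5 guarded by tmin = ticket a
  · refine ⟨?_, ?_, ?_⟩
    · intro t ht
      rw [htk, hav]
      by_cases hta : t = a
      · subst hta; exact h1 t (Or.inl hpc)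
      · rw [hp', Function.update_of_ne hta] at ht
        exact h1 t ht
    · intro t t' htt ht ht'
      rw [htk]
      by_cases hta : t = a
      · have ht'a : t' ≠ a := fun hh => htt (hta.trans hh.symm)
        subst hta
        rw [hp', Function.update_of_ne ht'a] at ht'
        exact h2 t t' htt (Or.inl hpc) ht'
      · by_cases ht'a : t' = a
        · subst ht'a
          rw [hp', Function.update_of_ne hta] at ht
          exact h2 t t' htt ht (Or.inl hpc)
        · rw [hp', Function.update_of_ne hta] at ht
          rw [hp', Function.update_of_ne ht'a] at ht'
          exact h2 t t' htt ht ht'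
    · intro t ht
      rw [hmin, htk]
      by_cases hta : t = a
      · subst hta; exact hg
      · rw [hp', Function.update_of_ne hta] at ht
        exact h3 t ht
  -- τ₅ : 5 → 6
  · refine ⟨?_, ?_, ?_⟩
    · intro t ht
      rw [htk, hav]
      by_cases hta : t = a
      · subst hta; exact h1 t (Or.inr (Or.inl hpc))
      · rw [hp', Function.update_of_ne hta] at ht
        exact h1 t ht
    · intro t t' htt ht ht'
      rw [htk]
      by_cases hta : t = a
      · have ht'a : t' ≠ a := fun hh => htt (hta.trans hh.symm)
        subst hta
        rw [hp', Function.update_of_ne ht'a] at ht'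
        exact h2 t t' htt (Or.inr (Or.inl hpc)) ht'
      · by_cases ht'a : t' = a
        · subst ht'a
          rw [hp', Function.update_of_ne hta] at ht
          exact h2 t t' htt ht (Or.inr (Or.inl hpc))
        · rw [hp', Function.update_of_ne hta] at ht
          rw [hp', Function.update_of_ne ht'a] at ht'
          exact h2 t t' htt ht ht'
    · intro t ht
      rw [htk]
      by_cases hta : t = a
      · subst hta; rw [hmin]; exact h3 t (Or.inl hpc)
      · rw [hp', Function.update_of_ne hta] at ht
        rw [hmin]; exact h3 t ht
  -- τ₆ : 6 → 7, min update
  · refine ⟨?_, ?_, ?_⟩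
    · intro t ht
      rw [htk, hav]
      by_cases hta : t = a
      · subst hta; rw [hp'] at ht; simp at ht
      · rw [hp', Function.update_of_ne hta] at ht
        exact h1 t ht
    · intro t t' htt ht ht'
      rw [htk]
      by_cases hta : t = a
      · subst hta; rw [hp'] at ht; simp at ht
      · by_cases ht'a : t' = a
        · subst ht'a; rw [hp'] at ht'; simp at ht'
        · rw [hp', Function.update_of_ne hta] at ht
          rw [hp', Function.update_of_ne ht'a] at ht'
          exact h2 t t' htt ht ht'
    · intro t ht
      -- no thread other than `a` can be at 5 or 6 in `s` (mutual exclusion from IInv)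
      by_cases hta : t = a
      · subst hta; rw [hp'] at ht; simp at ht
      · rw [hp', Function.update_of_ne hta] at ht
        exfalso
        have hmt : s.tmin = s.ticket t := h3 t ht
        have hma : s.tmin = s.ticket a := h3 a (Or.inr hpc)
        have hne' : s.ticket t ≠ s.ticket a :=
          h2 t a hta (by tauto) (Or.inr (Or.inr hpc))
        exact hne' (hmt ▸ hma ▸ rfl)

lemma IInv_reach {s : IState T} (h : IReachable s) : IInv s := by
  obtain ⟨s₀, h0, hr⟩ := h
  induction hr with
  | refl => exact IInv_init h0
  | tail _ hstep ih => obtain ⟨a, ha⟩ := hstep; exact IInv_step ih ha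

end Aux

theorem intTicket_mutex {T : Type*} [DecidableEq T] :
    ∀ s : IState T, IReachable s →
      ((∀ t, (s.pc t = 4 ∨ s.pc t = 5 ∨ s.pc t = 6) → s.ticket t < s.avail) ∧
       (∀ t t', t ≠ t' → (s.pc t = 4 ∨ s.pc t = 5 ∨ s.pc t = 6) →
          (s.pc t' = 4 ∨ s.pc t' = 5 ∨ s.pc t' = 6) → s.ticket t ≠ s.ticket t') ∧
       (∀ t, (s.pc t = 5 ∨ s.pc t = 6) → s.tmin = s.ticket t)) ∧
      (∀ t t', t ≠ t' →
        ¬ ((s.pc t = 5 ∨ s.pc t = 6) ∧ (s.pc t' = 5 ∨ s.pc t' = 6))) := by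
  intro s hs
  obtain ⟨h1, h2, h3⟩ := IInv_reach hs
  refine ⟨⟨h1, h2, h3⟩, ?_⟩
  rintro t t' htt ⟨ht, ht'⟩
  have e1 := h3 t ht
  have e2 := h3 t' ht'
  exact h2 t t' htt (by tauto) (by tauto) (e1 ▸ e2 ▸ rfl)
end

section
/- In the abstract parametrized setting, if a 1-index parametrized property P : T → State → Prop satisfies: (i) P i holds in all initial states for every thread i, (ii) for every thread i and every transition τ_ℓ[i] of thread i, P i is preserved, and (iii) for all distinct threads i ≠ j, if P i and P j hold at s and thread j takes any transition to s', then P i holds at s' (self-supported P3'), then for every thread i, P i holds at every reachable state (soundness of P-INV with self-support for 1-index invariants). -/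
/-- A parametrized system: global states `G`, thread identifiers `T`,
locations `L`, per-thread-per-location transition relations, and initial states. -/
structure ParamSys (G T L : Type*) where
  init : Set G
  step : L → T → G → G → Prop

def ParamSys.Reachable {G T L : Type*} (M : ParamSys G T L) (s : G) : Prop :=
  ∃ s₀ ∈ M.init, Relation.ReflTransGen (fun u v => ∃ ℓ i, M.step ℓ i u v) s₀ s

theorem p_inv_self_support_sound {G T L : Type*} (M : ParamSys G T L)
    (P : T → G → Prop)
    (hinit : ∀ i : T, ∀ s ∈ M.init, P i s)
    (hself : ∀ (i : T) (ℓ : L) (s s' : G), P i s → M.step ℓ i s s' → P i s')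
    (hother : ∀ i j : T, i ≠ j → ∀ (ℓ : L) (s s' : G),
      P i s → P j s → M.step ℓ j s s' → P i s') :
    ∀ i : T, ∀ s : G, M.Reachable s → P i s := by
  have key : ∀ s : G, M.Reachable s → ∀ i : T, P i s := by
    rintro s ⟨s₀, hs₀, hsteps⟩
    induction hsteps with
    | refl => exact fun i => hinit i s₀ hs₀
    | tail _ hstep ih =>
      rcases hstep with ⟨ℓ, j, hstep⟩
      intro i
      by_cases h : i = j
      · subst h; exact hself i ℓ _ _ (ih i) hstep
      · exact hother i j h ℓ _ _ (ih i) (ih j) hstep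
  exact fun i s hs => key s hs i
end

section
/- Concretization for 2-index symmetric properties: let the system be fully symmetric via thread-swap bijections, and let P : T × T → State → Prop be a parametrized predicate compatible with swaps (P (σ i, σ j) (σ · s) ↔ P (i,j) s for every swap σ). If P(a,b) holds at all reachable states for two fixed distinct threads a, b, then P(i,j) holds at all reachable states for every pair of distinct threads i, j. -/
/-- A parametrized system: global states `G`, thread identifiers `T`,
per-thread transition relations, and initial states. -/
structure PSys (G T : Type*) where
  init : Set G
  step : T → G → G → Prop

def PSys.Reachable {G T : Type*} (M : PSys G T) (s : G) : Prop :=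
  ∃ s₀ ∈ M.init, Relation.ReflTransGen (fun u v => ∃ a, M.step a u v) s₀ s

theorem concretization_two_index {G T : Type*} [DecidableEq T] (M : PSys G T)
    (π : T → T → G → G)
    (hbij : ∀ i j : T, Function.Bijective (π i j))
    (hinv : ∀ (i j : T) (s : G), π i j (π i j s) = s)
    (hinit : ∀ (i j : T) (s : G), s ∈ M.init ↔ π i j s ∈ M.init)
    (hstep : ∀ (i j k : T) (s s' : G),
      M.step k s s' ↔ M.step (Equiv.swap i j k) (π i j s) (π i j s'))
    (P : T → T → G → Prop)
    (hcompat : ∀ (k l i j : T) (s : G),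
      P i j s ↔ P (Equiv.swap k l i) (Equiv.swap k l j) (π k l s))
    (a b : T) (hab : a ≠ b)
    (hP : ∀ s : G, M.Reachable s → P a b s) :
    ∀ i j : T, i ≠ j → ∀ s : G, M.Reachable s → P i j s := by
  -- reachability is preserved by each π k l
  have hreach : ∀ (k l : T) (s : G), M.Reachable s → M.Reachable (π k l s) := by
    rintro k l s ⟨s₀, h₀, hrt⟩
    refine ⟨π k l s₀, (hinit k l s₀).mp h₀, ?_⟩
    induction hrt with
    | refl => exact Relation.ReflTransGen.refl
    | tail _ h ih =>
      obtain ⟨c, hc⟩ := h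
      exact ih.tail ⟨Equiv.swap k l c, (hstep k l c _ _).mp hc⟩
  -- one-swap transfer of the invariant
  have key : ∀ (x y k l : T), (∀ s, M.Reachable s → P x y s) →
      ∀ s, M.Reachable s → P (Equiv.swap k l x) (Equiv.swap k l y) s := by
    intro x y k l h s hs
    have := (hcompat k l x y (π k l s)).mp (h _ (hreach k l s hs))
    rwa [hinv] at this
  intro i j hij s hs
  have h1 := key a b a i hP
  rw [Equiv.swap_apply_left] at h1
  set b1 := Equiv.swap a i b with hb1
  have hb1i : b1 ≠ i := by
    intro h
    have h' : Equiv.swap a i b = Equiv.swap a i a := by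
      rw [Equiv.swap_apply_left]; exact h
    exact hab ((Equiv.swap a i).injective h').symm
  have h2 := key i b1 b1 j h1
  rw [Equiv.swap_apply_left] at h2
  rw [Equiv.swap_apply_of_ne_of_ne hb1i.symm hij] at h2
  exact h2 s hs
end

section
/- In the integer ticket protocol, tickets held by active threads are pairwise distinct and each ticket value is assigned to at most one active thread ever simultaneously: formally, the predicate notsame(i,j) := (i ≠ j ∧ pc(i) ∈ {4,5,6} ∧ pc(j) ∈ {4,5,6}) → ticket(i) ≠ ticket(j) is an inductive invariant when supported by activelow(i) := pc(i) ∈ {4,5,6} → ticket(i) < avail, i.e., the conjunction (∀ i, activelow i) ∧ (∀ i j, notsame i j) holds in the initial state and is preserved by every transition of every thread. -/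
/-- `activelow(i) ∧ notsame(i,j)` for all threads. -/
def ActiveLowNotSame {T : Type*} (s : IState T) : Prop :=
  (∀ i, (s.pc i = 4 ∨ s.pc i = 5 ∨ s.pc i = 6) → s.ticket i < s.avail) ∧
  (∀ i j, (i ≠ j ∧ (s.pc i = 4 ∨ s.pc i = 5 ∨ s.pc i = 6) ∧
      (s.pc j = 4 ∨ s.pc j = 5 ∨ s.pc j = 6)) → s.ticket i ≠ s.ticket j)


private lemma aux_pres {T : Type*} [DecidableEq T] (s s' : IState T) (a : T) (v : Fin 8)
    (hpc : s'.pc = Function.update s.pc a v)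
    (ht : s'.ticket = s.ticket) (hv : s'.avail = s.avail)
    (hact : (v = 4 ∨ v = 5 ∨ v = 6) → (s.pc a = 4 ∨ s.pc a = 5 ∨ s.pc a = 6))
    (h : ActiveLowNotSame s) : ActiveLowNotSame s' := by
  obtain ⟨h1, h2⟩ := h
  have key : ∀ t, (s'.pc t = 4 ∨ s'.pc t = 5 ∨ s'.pc t = 6) →
      (s.pc t = 4 ∨ s.pc t = 5 ∨ s.pc t = 6) := by
    intro t ht'
    by_cases hta : t = a
    · subst hta; rw [hpc, Function.update_self] at ht'; exact hact ht'
    · rwa [hpc, Function.update_of_ne hta] at ht'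
  constructor
  · intro i hi; rw [ht, hv]; exact h1 i (key i hi)
  · rintro i j ⟨hij, hi, hj⟩; rw [ht]; exact h2 i j ⟨hij, key i hi, key j hj⟩

theorem intTicket_notsame_inductive {T : Type*} [DecidableEq T] :
    (∀ s : IState T, IInit s → ActiveLowNotSame s) ∧
    (∀ (s s' : IState T) (a : T), ActiveLowNotSame s → IStep a s s' →
      ActiveLowNotSame s') := by
  constructor
  · rintro s ⟨ha, -, hpc, -⟩
    constructor
    · intro i hi
      rcases hi with h | h | h <;> rw [hpc i] at h <;> exact absurd h (by decide)
    · rintro i j ⟨-, (h | h | h), -⟩ <;> rw [hpc i] at h <;> exact absurd h (by decide)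
  · rintro s s' a h hstep
    rcases hstep with ⟨hp, hpc, ht, hv, -⟩ | ⟨hp, hpc, ht, hv, -⟩ |
      ⟨hp, hpc, ht, hv, -⟩ | ⟨hp, -, hpc, ht, hv, -⟩ | ⟨hp, hpc, ht, hv, -⟩ |
      ⟨hp, hpc, ht, hv, -⟩ | ⟨hp, hpc, ht, hv, -⟩
    · exact aux_pres s s' a 2 hpc ht hv (fun hh => absurd hh (by decide)) h
    · exact aux_pres s s' a 3 hpc ht hv (fun hh => absurd hh (by decide)) h
    · -- τ₃
      obtain ⟨h1, h2⟩ := h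
      have key : ∀ t, t ≠ a → (s'.pc t = 4 ∨ s'.pc t = 5 ∨ s'.pc t = 6) →
          (s.pc t = 4 ∨ s.pc t = 5 ∨ s.pc t = 6) := by
        intro t hta ht'
        rwa [hpc, Function.update_of_ne hta] at ht'
      constructor
      · intro i hi
        by_cases hia : i = a
        · rw [ht, hia, Function.update_self, hv]; omega
        · rw [ht, Function.update_of_ne hia, hv]
          have := h1 i (key i hia hi); omega
      · rintro i j ⟨hij, hi, hj⟩
        by_cases hia : i = a
        · have hja : j ≠ a := fun e => hij (hia.trans e.symm)
          rw [ht, hia, Function.update_self, Function.update_of_ne hja]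
          have := h1 j (key j hja hj); omega
        · by_cases hja : j = a
          · rw [ht, hja, Function.update_self, Function.update_of_ne hia]
            have := h1 i (key i hia hi); omega
          · rw [ht, Function.update_of_ne hia, Function.update_of_ne hja]
            exact h2 i j ⟨hij, key i hia hi, key j hja hj⟩
    · exact aux_pres s s' a 5 hpc ht hv (fun _ => Or.inl hp) h
    · exact aux_pres s s' a 6 hpc ht hv (fun _ => Or.inr (Or.inl hp)) h
    · exact aux_pres s s' a 7 hpc ht hv (fun hh => absurd hh (by decide)) h
    · exact aux_pres s s' a 1 hpc ht hv (fun hh => absurd hh (by decide)) h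
end
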